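/- Well-definedness of the transition maps of the noncommutative K_{ℙ²}: the assignment G_{21} : x_1 ↦ s^{-2}t^{-1}·z_2^{-1}, y_1 ↦ s^{-1}t^{-2}·y_2 z_2^{-1}, w_1 ↦ s³t⁹·w_2 z_2³ preserves the three defining relations of 𝒜_1 and hence defines a unital K-algebra homomorphism 𝒜_1⟨x_1^{-1}⟩ → 𝒜_2⟨z_2^{-1}⟩ (with x_1^{-1} ↦ s²t·z_2); likewise G_{32} : y_2 ↦ s^{-2}t^{-1}·x_3^{-1}, z_2 ↦ s^{-1}t^{-2}·z_3 x_3^{-1}, w_2 ↦ s³t⁹·w_3 x_3³ defines a unital K-algebra homomorphism 𝒜_2⟨y_2^{-1}⟩ → 𝒜_3⟨x_3^{-1}⟩, and G_{13} : z_3 ↦ s^{-2}t^{-1}·y_1^{-1}, x_3 ↦ s^{-1}t^{-2}·x_1 y_1^{-1}, w_3 ↦ s³t⁹·w_1 y_1³ defines a unital K-algebra homomorphism 𝒜_3⟨z_3^{-1}⟩ → 𝒜_1⟨y_1^{-1}⟩. -/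

import Mathlib

/-! Statement 16: well-definedness of the transition maps of the noncommutative `K_{ℙ²}`. -/

/-- Generators `w₁, y₁, x₁` of `𝒜₁`, together with an adjoined inverse generator. -/
inductive G1 : Type
  | w1 | y1 | x1 | inv
deriving DecidableEq

/-- Generators `w₂, z₂, y₂` of `𝒜₂`, together with an adjoined inverse generator. -/
inductive G2 : Type
  | w2 | z2 | y2 | inv
deriving DecidableEq

/-- Generators `w₃, x₃, z₃` of `𝒜₃`, together with an adjoined inverse generator. -/
inductive G3 : Type
  | w3 | x3 | z3 | inv
deriving DecidableEq

/-- Relations of `𝒜₁⟨j⁻¹⟩ = K⟨w₁,y₁,x₁⟩/(y₁x₁ − t⁻³x₁y₁, x₁w₁ − t⁻³w₁x₁, w₁y₁ − t⁻³y₁w₁)`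
with the generator `j` inverted. -/
inductive Rel1 (K : Type) [CommRing K] (t : Kˣ) (j : G1) :
    FreeAlgebra K G1 → FreeAlgebra K G1 → Prop
  | ryx : Rel1 K t j (FreeAlgebra.ι K G1.y1 * FreeAlgebra.ι K G1.x1)
      ((((t⁻¹ : Kˣ) : K) ^ 3) • (FreeAlgebra.ι K G1.x1 * FreeAlgebra.ι K G1.y1))
  | rxw : Rel1 K t j (FreeAlgebra.ι K G1.x1 * FreeAlgebra.ι K G1.w1)
      ((((t⁻¹ : Kˣ) : K) ^ 3) • (FreeAlgebra.ι K G1.w1 * FreeAlgebra.ι K G1.x1))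
  | rwy : Rel1 K t j (FreeAlgebra.ι K G1.w1 * FreeAlgebra.ι K G1.y1)
      ((((t⁻¹ : Kˣ) : K) ^ 3) • (FreeAlgebra.ι K G1.y1 * FreeAlgebra.ι K G1.w1))
  | inv_left : Rel1 K t j (FreeAlgebra.ι K G1.inv * FreeAlgebra.ι K j) 1
  | inv_right : Rel1 K t j (FreeAlgebra.ι K j * FreeAlgebra.ι K G1.inv) 1

/-- Relations of `𝒜₂⟨j⁻¹⟩ = K⟨w₂,z₂,y₂⟩/(z₂y₂ − t⁻³y₂z₂, y₂w₂ − t⁻³w₂y₂, w₂z₂ − t⁻³z₂w₂)`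
with the generator `j` inverted. -/
inductive Rel2 (K : Type) [CommRing K] (t : Kˣ) (j : G2) :
    FreeAlgebra K G2 → FreeAlgebra K G2 → Prop
  | rzy : Rel2 K t j (FreeAlgebra.ι K G2.z2 * FreeAlgebra.ι K G2.y2)
      ((((t⁻¹ : Kˣ) : K) ^ 3) • (FreeAlgebra.ι K G2.y2 * FreeAlgebra.ι K G2.z2))
  | ryw : Rel2 K t j (FreeAlgebra.ι K G2.y2 * FreeAlgebra.ι K G2.w2)
      ((((t⁻¹ : Kˣ) : K) ^ 3) • (FreeAlgebra.ι K G2.w2 * FreeAlgebra.ι K G2.y2))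
  | rwz : Rel2 K t j (FreeAlgebra.ι K G2.w2 * FreeAlgebra.ι K G2.z2)
      ((((t⁻¹ : Kˣ) : K) ^ 3) • (FreeAlgebra.ι K G2.z2 * FreeAlgebra.ι K G2.w2))
  | inv_left : Rel2 K t j (FreeAlgebra.ι K G2.inv * FreeAlgebra.ι K j) 1
  | inv_right : Rel2 K t j (FreeAlgebra.ι K j * FreeAlgebra.ι K G2.inv) 1

/-- Relations of `𝒜₃⟨j⁻¹⟩ = K⟨w₃,x₃,z₃⟩/(x₃z₃ − t⁻³z₃x₃, z₃w₃ − t⁻³w₃z₃, w₃x₃ − t⁻³x₃w₃)`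
with the generator `j` inverted. -/
inductive Rel3 (K : Type) [CommRing K] (t : Kˣ) (j : G3) :
    FreeAlgebra K G3 → FreeAlgebra K G3 → Prop
  | rxz : Rel3 K t j (FreeAlgebra.ι K G3.x3 * FreeAlgebra.ι K G3.z3)
      ((((t⁻¹ : Kˣ) : K) ^ 3) • (FreeAlgebra.ι K G3.z3 * FreeAlgebra.ι K G3.x3))
  | rzw : Rel3 K t j (FreeAlgebra.ι K G3.z3 * FreeAlgebra.ι K G3.w3)
      ((((t⁻¹ : Kˣ) : K) ^ 3) • (FreeAlgebra.ι K G3.w3 * FreeAlgebra.ι K G3.z3))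
  | rwx : Rel3 K t j (FreeAlgebra.ι K G3.w3 * FreeAlgebra.ι K G3.x3)
      ((((t⁻¹ : Kˣ) : K) ^ 3) • (FreeAlgebra.ι K G3.x3 * FreeAlgebra.ι K G3.w3))
  | inv_left : Rel3 K t j (FreeAlgebra.ι K G3.inv * FreeAlgebra.ι K j) 1
  | inv_right : Rel3 K t j (FreeAlgebra.ι K j * FreeAlgebra.ι K G3.inv) 1

section

variable (K : Type) [CommRing K] (t : Kˣ)

/-- `𝒜₁⟨x₁⁻¹⟩`. -/
abbrev A1x := RingQuot (Rel1 K t G1.x1)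
/-- `𝒜₁⟨y₁⁻¹⟩`. -/
abbrev A1y := RingQuot (Rel1 K t G1.y1)
/-- `𝒜₂⟨z₂⁻¹⟩`. -/
abbrev A2z := RingQuot (Rel2 K t G2.z2)
/-- `𝒜₂⟨y₂⁻¹⟩`. -/
abbrev A2y := RingQuot (Rel2 K t G2.y2)
/-- `𝒜₃⟨x₃⁻¹⟩`. -/
abbrev A3x := RingQuot (Rel3 K t G3.x3)
/-- `𝒜₃⟨z₃⁻¹⟩`. -/
abbrev A3z := RingQuot (Rel3 K t G3.z3)

end

/-- image of a generator in a localization of `𝒜₁`. -/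
def el1 (K : Type) [CommRing K] (t : Kˣ) (j : G1) (g : G1) : RingQuot (Rel1 K t j) :=
  RingQuot.mkAlgHom K (Rel1 K t j) (FreeAlgebra.ι K g)

/-- image of a generator in a localization of `𝒜₂`. -/
def el2 (K : Type) [CommRing K] (t : Kˣ) (j : G2) (g : G2) : RingQuot (Rel2 K t j) :=
  RingQuot.mkAlgHom K (Rel2 K t j) (FreeAlgebra.ι K g)

/-- image of a generator in a localization of `𝒜₃`. -/
def el3 (K : Type) [CommRing K] (t : Kˣ) (j : G3) (g : G3) : RingQuot (Rel3 K t j) :=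
  RingQuot.mkAlgHom K (Rel3 K t j) (FreeAlgebra.ι K g)



private lemma smul_congr_left {K A : Type} [CommRing K] [Ring A] [Algebra K A]
    {a b : K} (x : A) (h : a = b) : a • x = b • x := by rw [h]

lemma nc_core {K : Type} [CommRing K] {A : Type} [Ring A] [Algebra K A]
    (c α β γ δ : K) (W Z Y I : A)
    (hzy : Z*Y = c•(Y*Z)) (hyw : Y*W = c•(W*Y)) (hwz : W*Z = c•(Z*W))
    (hiz : I*Z = 1) (hzi : Z*I = 1) (hδα : δ*α = 1) :
    ((β•(Y*I)) * (α•I) = c • ((α•I) * (β•(Y*I))))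
    ∧ ((α•I) * (γ•(W*Z^3)) = c • ((γ•(W*Z^3)) * (α•I)))
    ∧ ((γ•(W*Z^3)) * (β•(Y*I)) = c • ((β•(Y*I)) * (γ•(W*Z^3))))
    ∧ ((δ•Z)*(α•I) = 1) ∧ ((α•I)*(δ•Z) = 1) := by
  have h1 : Y*I = c•(I*Y) := by
    calc Y*I = (I*Z)*(Y*I) := by rw [hiz, one_mul]
    _ = I*(Z*Y)*I := by simp [mul_assoc]
    _ = I*(c•(Y*Z))*I := by rw [hzy]
    _ = c•(I*Y*(Z*I)) := by simp [mul_smul_comm, smul_mul_assoc, mul_assoc]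
    _ = c•(I*Y) := by rw [hzi, mul_one]
  have h2 : I*W = c•(W*I) := by
    calc I*W = (I*W)*(Z*I) := by rw [hzi, mul_one]
    _ = I*(W*Z)*I := by simp [mul_assoc]
    _ = I*(c•(Z*W))*I := by rw [hwz]
    _ = c•((I*Z)*(W*I)) := by simp [mul_smul_comm, smul_mul_assoc, mul_assoc]
    _ = c•(W*I) := by rw [hiz, one_mul]
  have hz3i : (Z^3)*I = Z^2 := by
    rw [pow_succ, mul_assoc, hzi, mul_one]
  have hz3y : Z^3*Y = (c*(c*c))•(Y*Z^3) := by
    have h3 : Z^3 = Z*(Z*Z) := by rw [pow_succ', sq]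
    rw [h3]
    calc Z*(Z*Z)*Y = Z*(Z*(Z*Y)) := by simp [mul_assoc]
    _ = Z*(Z*(c•(Y*Z))) := by rw [hzy]
    _ = c•(Z*((Z*Y)*Z)) := by simp [mul_smul_comm, mul_assoc]
    _ = c•(Z*((c•(Y*Z))*Z)) := by rw [hzy]
    _ = (c*c)•((Z*Y)*(Z*Z)) := by
        simp [mul_smul_comm, smul_mul_assoc, smul_smul, mul_assoc]
    _ = (c*c)•((c•(Y*Z))*(Z*Z)) := by rw [hzy]
    _ = (c*(c*c))•(Y*(Z*(Z*Z))) := by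
        simp [smul_mul_assoc, smul_smul, mul_assoc]
  refine ⟨?_, ?_, ?_, ?_, ?_⟩
  · calc (β•(Y*I)) * (α•I) = (β*α)•((Y*I)*I) := by
          simp [smul_mul_assoc, mul_smul_comm, smul_smul]
          exact smul_congr_left _ (by ring)
    _ = (β*α)•((c•(I*Y))*I) := by rw [h1]
    _ = c • ((α•I) * (β•(Y*I))) := by
          simp [smul_mul_assoc, mul_smul_comm, smul_smul, mul_assoc]
          exact smul_congr_left _ (by ring)
  · calc (α•I) * (γ•(W*Z^3)) = (α*γ)•(I*W*Z^3) := by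
          simp [smul_mul_assoc, mul_smul_comm, smul_smul, mul_assoc]
          exact smul_congr_left _ (by ring)
    _ = (α*γ)•((c•(W*I))*Z^3) := by rw [h2]
    _ = (c*(γ*α))•(W*(I*(Z*Z^2))) := by
          have h3 : Z^3 = Z*Z^2 := pow_succ' Z 2
          rw [h3]
          simp [smul_mul_assoc, mul_smul_comm, smul_smul, mul_assoc]
          exact smul_congr_left _ (by ring)
    _ = (c*(γ*α))•(W*((I*Z)*Z^2)) := by rw [mul_assoc I Z]
    _ = (c*(γ*α))•(W*Z^2) := by rw [hiz, one_mul]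
    _ = c • ((γ•(W*Z^3)) * (α•I)) := by
          have h4 : (W*Z^3)*I = W*Z^2 := by rw [mul_assoc, hz3i]
          simp [smul_mul_assoc, mul_smul_comm, smul_smul, h4]
          exact smul_congr_left _ (by ring)
  · have lhs : (W*Z^3)*(Y*I) = (c*(c*c))•(W*Y*Z^2) := by
      calc (W*Z^3)*(Y*I) = (W*(Z^3*Y))*I := by simp [mul_assoc]
      _ = (W*((c*(c*c))•(Y*Z^3)))*I := by rw [hz3y]
      _ = (c*(c*c))•(W*Y*(Z^3*I)) := by
            simp [mul_smul_comm, smul_mul_assoc, mul_assoc]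
      _ = (c*(c*c))•(W*Y*Z^2) := by rw [hz3i]
    have rhs : (Y*I)*(W*Z^3) = (c*c)•(W*Y*Z^2) := by
      calc (Y*I)*(W*Z^3) = Y*(I*W)*Z^3 := by simp [mul_assoc]
      _ = Y*(c•(W*I))*Z^3 := by rw [h2]
      _ = c•(Y*W*(I*(Z*Z^2))) := by
            have h3 : Z^3 = Z*Z^2 := pow_succ' Z 2
            rw [h3]
            simp [mul_smul_comm, smul_mul_assoc, mul_assoc]
      _ = c•(Y*W*((I*Z)*Z^2)) := by rw [mul_assoc I Z]
      _ = c•(Y*W*Z^2) := by rw [hiz, one_mul]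
      _ = c•((c•(W*Y))*Z^2) := by rw [hyw]
      _ = (c*c)•(W*Y*Z^2) := by
            simp [smul_mul_assoc, smul_smul, mul_assoc]
    calc (γ•(W*Z^3)) * (β•(Y*I)) = (γ*β)•((W*Z^3)*(Y*I)) := by
          simp [smul_mul_assoc, mul_smul_comm, smul_smul]
          exact smul_congr_left _ (by ring)
    _ = (γ*β*(c*(c*c)))•(W*Y*Z^2) := by rw [lhs, smul_smul]
    _ = c•((β*γ)•((Y*I)*(W*Z^3))) := by
          rw [rhs, smul_smul, smul_smul]
          exact smul_congr_left _ (by ring)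
    _ = c • ((β•(Y*I)) * (γ•(W*Z^3))) := by
          simp [smul_mul_assoc, mul_smul_comm, smul_smul]
          exact smul_congr_left _ (by ring)
  · calc (δ•Z)*(α•I) = (δ*α)•(Z*I) := by
          simp [smul_mul_assoc, mul_smul_comm, smul_smul]
          exact smul_congr_left _ (by ring)
    _ = 1 := by rw [hδα, hzi, one_smul]
  · calc (α•I)*(δ•Z) = (δ*α)•(I*Z) := by
          simp [smul_mul_assoc, mul_smul_comm, smul_smul]
    _ = 1 := by rw [hδα, hiz, one_smul]

set_option maxHeartbeats 1600000 in
/-- Well-definedness of the transition maps of the noncommutative `K_{ℙ²}`: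
`G₂₁ : x₁ ↦ s⁻²t⁻¹·z₂⁻¹, y₁ ↦ s⁻¹t⁻²·y₂z₂⁻¹, w₁ ↦ s³t⁹·w₂z₂³` preserves the three defining
relations of `𝒜₁` and defines a unital `K`-algebra homomorphism `𝒜₁⟨x₁⁻¹⟩ → 𝒜₂⟨z₂⁻¹⟩`
(with `x₁⁻¹ ↦ s²t·z₂`); likewise for `G₃₂ : 𝒜₂⟨y₂⁻¹⟩ → 𝒜₃⟨x₃⁻¹⟩` and
`G₁₃ : 𝒜₃⟨z₃⁻¹⟩ → 𝒜₁⟨y₁⁻¹⟩`. -/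
theorem nc_KP2_transition_maps (K : Type) [CommRing K] (s t : Kˣ) :
    -- G₂₁ : 𝒜₁⟨x₁⁻¹⟩ → 𝒜₂⟨z₂⁻¹⟩
    ((((((s⁻¹ : Kˣ) : K) ^ 1 * ((t⁻¹ : Kˣ) : K) ^ 2) • (el2 K t G2.z2 G2.y2 * el2 K t G2.z2 G2.inv))
        * ((((s⁻¹ : Kˣ) : K) ^ 2 * ((t⁻¹ : Kˣ) : K)) • el2 K t G2.z2 G2.inv)
        = (((t⁻¹ : Kˣ) : K) ^ 3) •
            (((((s⁻¹ : Kˣ) : K) ^ 2 * ((t⁻¹ : Kˣ) : K)) • el2 K t G2.z2 G2.inv)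
              * ((((s⁻¹ : Kˣ) : K) ^ 1 * ((t⁻¹ : Kˣ) : K) ^ 2) •
                  (el2 K t G2.z2 G2.y2 * el2 K t G2.z2 G2.inv))))
      ∧ (((((s⁻¹ : Kˣ) : K) ^ 2 * ((t⁻¹ : Kˣ) : K)) • el2 K t G2.z2 G2.inv)
          * ((((s : Kˣ) : K) ^ 3 * ((t : Kˣ) : K) ^ 9) •
              (el2 K t G2.z2 G2.w2 * el2 K t G2.z2 G2.z2 ^ 3))
        = (((t⁻¹ : Kˣ) : K) ^ 3) •
            (((((s : Kˣ) : K) ^ 3 * ((t : Kˣ) : K) ^ 9) •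
                (el2 K t G2.z2 G2.w2 * el2 K t G2.z2 G2.z2 ^ 3))
              * ((((s⁻¹ : Kˣ) : K) ^ 2 * ((t⁻¹ : Kˣ) : K)) • el2 K t G2.z2 G2.inv)))
      ∧ (((((s : Kˣ) : K) ^ 3 * ((t : Kˣ) : K) ^ 9) •
            (el2 K t G2.z2 G2.w2 * el2 K t G2.z2 G2.z2 ^ 3))
          * ((((s⁻¹ : Kˣ) : K) ^ 1 * ((t⁻¹ : Kˣ) : K) ^ 2) •
              (el2 K t G2.z2 G2.y2 * el2 K t G2.z2 G2.inv))
        = (((t⁻¹ : Kˣ) : K) ^ 3) •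
            (((((s⁻¹ : Kˣ) : K) ^ 1 * ((t⁻¹ : Kˣ) : K) ^ 2) •
                (el2 K t G2.z2 G2.y2 * el2 K t G2.z2 G2.inv))
              * ((((s : Kˣ) : K) ^ 3 * ((t : Kˣ) : K) ^ 9) •
                  (el2 K t G2.z2 G2.w2 * el2 K t G2.z2 G2.z2 ^ 3))))
      ∧ ∃ G : A1x K t →ₐ[K] A2z K t,
          G (el1 K t G1.x1 G1.x1)
              = (((s⁻¹ : Kˣ) : K) ^ 2 * ((t⁻¹ : Kˣ) : K)) • el2 K t G2.z2 G2.inv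
          ∧ G (el1 K t G1.x1 G1.y1)
              = (((s⁻¹ : Kˣ) : K) ^ 1 * ((t⁻¹ : Kˣ) : K) ^ 2) •
                  (el2 K t G2.z2 G2.y2 * el2 K t G2.z2 G2.inv)
          ∧ G (el1 K t G1.x1 G1.w1)
              = (((s : Kˣ) : K) ^ 3 * ((t : Kˣ) : K) ^ 9) •
                  (el2 K t G2.z2 G2.w2 * el2 K t G2.z2 G2.z2 ^ 3)
          ∧ G (el1 K t G1.x1 G1.inv)
              = (((s : Kˣ) : K) ^ 2 * ((t : Kˣ) : K)) • el2 K t G2.z2 G2.z2)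
    -- G₃₂ : 𝒜₂⟨y₂⁻¹⟩ → 𝒜₃⟨x₃⁻¹⟩
    ∧ ((((((s⁻¹ : Kˣ) : K) ^ 1 * ((t⁻¹ : Kˣ) : K) ^ 2) • (el3 K t G3.x3 G3.z3 * el3 K t G3.x3 G3.inv))
        * ((((s⁻¹ : Kˣ) : K) ^ 2 * ((t⁻¹ : Kˣ) : K)) • el3 K t G3.x3 G3.inv)
        = (((t⁻¹ : Kˣ) : K) ^ 3) •
            (((((s⁻¹ : Kˣ) : K) ^ 2 * ((t⁻¹ : Kˣ) : K)) • el3 K t G3.x3 G3.inv)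
              * ((((s⁻¹ : Kˣ) : K) ^ 1 * ((t⁻¹ : Kˣ) : K) ^ 2) •
                  (el3 K t G3.x3 G3.z3 * el3 K t G3.x3 G3.inv))))
      ∧ (((((s⁻¹ : Kˣ) : K) ^ 2 * ((t⁻¹ : Kˣ) : K)) • el3 K t G3.x3 G3.inv)
          * ((((s : Kˣ) : K) ^ 3 * ((t : Kˣ) : K) ^ 9) •
              (el3 K t G3.x3 G3.w3 * el3 K t G3.x3 G3.x3 ^ 3))
        = (((t⁻¹ : Kˣ) : K) ^ 3) •
            (((((s : Kˣ) : K) ^ 3 * ((t : Kˣ) : K) ^ 9) •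
                (el3 K t G3.x3 G3.w3 * el3 K t G3.x3 G3.x3 ^ 3))
              * ((((s⁻¹ : Kˣ) : K) ^ 2 * ((t⁻¹ : Kˣ) : K)) • el3 K t G3.x3 G3.inv)))
      ∧ (((((s : Kˣ) : K) ^ 3 * ((t : Kˣ) : K) ^ 9) •
            (el3 K t G3.x3 G3.w3 * el3 K t G3.x3 G3.x3 ^ 3))
          * ((((s⁻¹ : Kˣ) : K) ^ 1 * ((t⁻¹ : Kˣ) : K) ^ 2) •
              (el3 K t G3.x3 G3.z3 * el3 K t G3.x3 G3.inv))
        = (((t⁻¹ : Kˣ) : K) ^ 3) •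
            (((((s⁻¹ : Kˣ) : K) ^ 1 * ((t⁻¹ : Kˣ) : K) ^ 2) •
                (el3 K t G3.x3 G3.z3 * el3 K t G3.x3 G3.inv))
              * ((((s : Kˣ) : K) ^ 3 * ((t : Kˣ) : K) ^ 9) •
                  (el3 K t G3.x3 G3.w3 * el3 K t G3.x3 G3.x3 ^ 3))))
      ∧ ∃ G : A2y K t →ₐ[K] A3x K t,
          G (el2 K t G2.y2 G2.y2)
              = (((s⁻¹ : Kˣ) : K) ^ 2 * ((t⁻¹ : Kˣ) : K)) • el3 K t G3.x3 G3.inv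
          ∧ G (el2 K t G2.y2 G2.z2)
              = (((s⁻¹ : Kˣ) : K) ^ 1 * ((t⁻¹ : Kˣ) : K) ^ 2) •
                  (el3 K t G3.x3 G3.z3 * el3 K t G3.x3 G3.inv)
          ∧ G (el2 K t G2.y2 G2.w2)
              = (((s : Kˣ) : K) ^ 3 * ((t : Kˣ) : K) ^ 9) •
                  (el3 K t G3.x3 G3.w3 * el3 K t G3.x3 G3.x3 ^ 3)
          ∧ G (el2 K t G2.y2 G2.inv)
              = (((s : Kˣ) : K) ^ 2 * ((t : Kˣ) : K)) • el3 K t G3.x3 G3.x3)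
    -- G₁₃ : 𝒜₃⟨z₃⁻¹⟩ → 𝒜₁⟨y₁⁻¹⟩
    ∧ ((((((s⁻¹ : Kˣ) : K) ^ 1 * ((t⁻¹ : Kˣ) : K) ^ 2) • (el1 K t G1.y1 G1.x1 * el1 K t G1.y1 G1.inv))
        * ((((s⁻¹ : Kˣ) : K) ^ 2 * ((t⁻¹ : Kˣ) : K)) • el1 K t G1.y1 G1.inv)
        = (((t⁻¹ : Kˣ) : K) ^ 3) •
            (((((s⁻¹ : Kˣ) : K) ^ 2 * ((t⁻¹ : Kˣ) : K)) • el1 K t G1.y1 G1.inv)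
              * ((((s⁻¹ : Kˣ) : K) ^ 1 * ((t⁻¹ : Kˣ) : K) ^ 2) •
                  (el1 K t G1.y1 G1.x1 * el1 K t G1.y1 G1.inv))))
      ∧ (((((s⁻¹ : Kˣ) : K) ^ 2 * ((t⁻¹ : Kˣ) : K)) • el1 K t G1.y1 G1.inv)
          * ((((s : Kˣ) : K) ^ 3 * ((t : Kˣ) : K) ^ 9) •
              (el1 K t G1.y1 G1.w1 * el1 K t G1.y1 G1.y1 ^ 3))
        = (((t⁻¹ : Kˣ) : K) ^ 3) •
            (((((s : Kˣ) : K) ^ 3 * ((t : Kˣ) : K) ^ 9) •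
                (el1 K t G1.y1 G1.w1 * el1 K t G1.y1 G1.y1 ^ 3))
              * ((((s⁻¹ : Kˣ) : K) ^ 2 * ((t⁻¹ : Kˣ) : K)) • el1 K t G1.y1 G1.inv)))
      ∧ (((((s : Kˣ) : K) ^ 3 * ((t : Kˣ) : K) ^ 9) •
            (el1 K t G1.y1 G1.w1 * el1 K t G1.y1 G1.y1 ^ 3))
          * ((((s⁻¹ : Kˣ) : K) ^ 1 * ((t⁻¹ : Kˣ) : K) ^ 2) •
              (el1 K t G1.y1 G1.x1 * el1 K t G1.y1 G1.inv))
        = (((t⁻¹ : Kˣ) : K) ^ 3) •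
            (((((s⁻¹ : Kˣ) : K) ^ 1 * ((t⁻¹ : Kˣ) : K) ^ 2) •
                (el1 K t G1.y1 G1.x1 * el1 K t G1.y1 G1.inv))
              * ((((s : Kˣ) : K) ^ 3 * ((t : Kˣ) : K) ^ 9) •
                  (el1 K t G1.y1 G1.w1 * el1 K t G1.y1 G1.y1 ^ 3))))
      ∧ ∃ G : A3z K t →ₐ[K] A1y K t,
          G (el3 K t G3.z3 G3.z3)
              = (((s⁻¹ : Kˣ) : K) ^ 2 * ((t⁻¹ : Kˣ) : K)) • el1 K t G1.y1 G1.inv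
          ∧ G (el3 K t G3.z3 G3.x3)
              = (((s⁻¹ : Kˣ) : K) ^ 1 * ((t⁻¹ : Kˣ) : K) ^ 2) •
                  (el1 K t G1.y1 G1.x1 * el1 K t G1.y1 G1.inv)
          ∧ G (el3 K t G3.z3 G3.w3)
              = (((s : Kˣ) : K) ^ 3 * ((t : Kˣ) : K) ^ 9) •
                  (el1 K t G1.y1 G1.w1 * el1 K t G1.y1 G1.y1 ^ 3)
          ∧ G (el3 K t G3.z3 G3.inv)
              = (((s : Kˣ) : K) ^ 2 * ((t : Kˣ) : K)) • el1 K t G1.y1 G1.y1) := by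
  classical
  have hδα : (((s : Kˣ) : K) ^ 2 * ((t : Kˣ) : K)) * ((((s⁻¹ : Kˣ) : K) ^ 2 * ((t⁻¹ : Kˣ) : K))) = 1 := by
    have hs : ((s : Kˣ) : K) * ((s⁻¹ : Kˣ) : K) = 1 := s.mul_inv
    have ht : ((t : Kˣ) : K) * ((t⁻¹ : Kˣ) : K) = 1 := t.mul_inv
    calc (((s : Kˣ) : K) ^ 2 * ((t : Kˣ) : K)) * ((((s⁻¹ : Kˣ) : K) ^ 2 * ((t⁻¹ : Kˣ) : K)))
        = (((s : Kˣ) : K) * ((s⁻¹ : Kˣ) : K))^2 * (((t : Kˣ) : K) * ((t⁻¹ : Kˣ) : K)) := by ring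
    _ = 1 := by rw [hs, ht]; ring
  refine ⟨?_, ?_, ?_⟩
  · set c : K := (((t⁻¹ : Kˣ) : K) ^ 3) with hc
    set W := el2 K t G2.z2 G2.w2
    set Z := el2 K t G2.z2 G2.z2
    set Y := el2 K t G2.z2 G2.y2
    set I := el2 K t G2.z2 G2.inv
    have hzy : Z*Y = c•(Y*Z) := by
      have := RingQuot.mkAlgHom_rel (S := K) (Rel2.rzy (K := K) (t := t) (j := G2.z2))
      simpa [el2, map_mul, map_smul, W, Z, Y, I, c] using this
    have hyw : Y*W = c•(W*Y) := by
      have := RingQuot.mkAlgHom_rel (S := K) (Rel2.ryw (K := K) (t := t) (j := G2.z2))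
      simpa [el2, map_mul, map_smul, W, Z, Y, I, c] using this
    have hwz : W*Z = c•(Z*W) := by
      have := RingQuot.mkAlgHom_rel (S := K) (Rel2.rwz (K := K) (t := t) (j := G2.z2))
      simpa [el2, map_mul, map_smul, W, Z, Y, I, c] using this
    have hiz : I*Z = 1 := by
      have := RingQuot.mkAlgHom_rel (S := K) (Rel2.inv_left (K := K) (t := t) (j := G2.z2))
      simpa [el2, map_mul, map_one, W, Z, Y, I, c] using this
    have hzi : Z*I = 1 := by
      have := RingQuot.mkAlgHom_rel (S := K) (Rel2.inv_right (K := K) (t := t) (j := G2.z2))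
      simpa [el2, map_mul, map_one, W, Z, Y, I, c] using this
    obtain ⟨E1, E2, E3, E4, E5⟩ := nc_core c
      ((((s⁻¹ : Kˣ) : K) ^ 2 * ((t⁻¹ : Kˣ) : K)))
      ((((s⁻¹ : Kˣ) : K) ^ 1 * ((t⁻¹ : Kˣ) : K) ^ 2))
      ((((s : Kˣ) : K) ^ 3 * ((t : Kˣ) : K) ^ 9))
      ((((s : Kˣ) : K) ^ 2 * ((t : Kˣ) : K)))
      W Z Y I hzy hyw hwz hiz hzi hδα
    have hrel : ∀ ⦃a b : FreeAlgebra K G1⦄, Rel1 K t G1.x1 a b →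
        (FreeAlgebra.lift K (fun g : G1 => match g with
          | G1.w1 => ((((s : Kˣ) : K) ^ 3 * ((t : Kˣ) : K) ^ 9)) • (W*Z^3)
          | G1.y1 => ((((s⁻¹ : Kˣ) : K) ^ 1 * ((t⁻¹ : Kˣ) : K) ^ 2)) • (Y*I)
          | G1.x1 => ((((s⁻¹ : Kˣ) : K) ^ 2 * ((t⁻¹ : Kˣ) : K))) • I
          | G1.inv => ((((s : Kˣ) : K) ^ 2 * ((t : Kˣ) : K))) • Z)) a =
        (FreeAlgebra.lift K (fun g : G1 => match g with
          | G1.w1 => ((((s : Kˣ) : K) ^ 3 * ((t : Kˣ) : K) ^ 9)) • (W*Z^3)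
          | G1.y1 => ((((s⁻¹ : Kˣ) : K) ^ 1 * ((t⁻¹ : Kˣ) : K) ^ 2)) • (Y*I)
          | G1.x1 => ((((s⁻¹ : Kˣ) : K) ^ 2 * ((t⁻¹ : Kˣ) : K))) • I
          | G1.inv => ((((s : Kˣ) : K) ^ 2 * ((t : Kˣ) : K))) • Z)) b := by
      intro a b h
      cases h <;>
        simp only [map_mul, map_smul, map_one, FreeAlgebra.lift_ι_apply]
      · exact E1
      · exact E2
      · exact E3
      · exact E4
      · exact E5
    set G := RingQuot.liftAlgHom K (s := Rel1 K t G1.x1) ⟨_, hrel⟩ with hG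
    refine ⟨E1, E2, E3, G, ?_, ?_, ?_, ?_⟩ <;>
      rw [hG, el1, RingQuot.liftAlgHom_mkAlgHom_apply, FreeAlgebra.lift_ι_apply]
  · set c : K := (((t⁻¹ : Kˣ) : K) ^ 3) with hc
    set W := el3 K t G3.x3 G3.w3
    set Z := el3 K t G3.x3 G3.x3
    set Y := el3 K t G3.x3 G3.z3
    set I := el3 K t G3.x3 G3.inv
    have hzy : Z*Y = c•(Y*Z) := by
      have := RingQuot.mkAlgHom_rel (S := K) (Rel3.rxz (K := K) (t := t) (j := G3.x3))
      simpa [el3, map_mul, map_smul, W, Z, Y, I, c] using this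
    have hyw : Y*W = c•(W*Y) := by
      have := RingQuot.mkAlgHom_rel (S := K) (Rel3.rzw (K := K) (t := t) (j := G3.x3))
      simpa [el3, map_mul, map_smul, W, Z, Y, I, c] using this
    have hwz : W*Z = c•(Z*W) := by
      have := RingQuot.mkAlgHom_rel (S := K) (Rel3.rwx (K := K) (t := t) (j := G3.x3))
      simpa [el3, map_mul, map_smul, W, Z, Y, I, c] using this
    have hiz : I*Z = 1 := by
      have := RingQuot.mkAlgHom_rel (S := K) (Rel3.inv_left (K := K) (t := t) (j := G3.x3))
      simpa [el3, map_mul, map_one, W, Z, Y, I, c] using this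
    have hzi : Z*I = 1 := by
      have := RingQuot.mkAlgHom_rel (S := K) (Rel3.inv_right (K := K) (t := t) (j := G3.x3))
      simpa [el3, map_mul, map_one, W, Z, Y, I, c] using this
    obtain ⟨E1, E2, E3, E4, E5⟩ := nc_core c
      ((((s⁻¹ : Kˣ) : K) ^ 2 * ((t⁻¹ : Kˣ) : K)))
      ((((s⁻¹ : Kˣ) : K) ^ 1 * ((t⁻¹ : Kˣ) : K) ^ 2))
      ((((s : Kˣ) : K) ^ 3 * ((t : Kˣ) : K) ^ 9))
      ((((s : Kˣ) : K) ^ 2 * ((t : Kˣ) : K)))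
      W Z Y I hzy hyw hwz hiz hzi hδα
    have hrel : ∀ ⦃a b : FreeAlgebra K G2⦄, Rel2 K t G2.y2 a b →
        (FreeAlgebra.lift K (fun g : G2 => match g with
          | G2.w2 => ((((s : Kˣ) : K) ^ 3 * ((t : Kˣ) : K) ^ 9)) • (W*Z^3)
          | G2.z2 => ((((s⁻¹ : Kˣ) : K) ^ 1 * ((t⁻¹ : Kˣ) : K) ^ 2)) • (Y*I)
          | G2.y2 => ((((s⁻¹ : Kˣ) : K) ^ 2 * ((t⁻¹ : Kˣ) : K))) • I
          | G2.inv => ((((s : Kˣ) : K) ^ 2 * ((t : Kˣ) : K))) • Z)) a =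
        (FreeAlgebra.lift K (fun g : G2 => match g with
          | G2.w2 => ((((s : Kˣ) : K) ^ 3 * ((t : Kˣ) : K) ^ 9)) • (W*Z^3)
          | G2.z2 => ((((s⁻¹ : Kˣ) : K) ^ 1 * ((t⁻¹ : Kˣ) : K) ^ 2)) • (Y*I)
          | G2.y2 => ((((s⁻¹ : Kˣ) : K) ^ 2 * ((t⁻¹ : Kˣ) : K))) • I
          | G2.inv => ((((s : Kˣ) : K) ^ 2 * ((t : Kˣ) : K))) • Z)) b := by
      intro a b h
      cases h <;>
        simp only [map_mul, map_smul, map_one, FreeAlgebra.lift_ι_apply]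
      · exact E1
      · exact E2
      · exact E3
      · exact E4
      · exact E5
    set G := RingQuot.liftAlgHom K (s := Rel2 K t G2.y2) ⟨_, hrel⟩ with hG
    refine ⟨E1, E2, E3, G, ?_, ?_, ?_, ?_⟩ <;>
      rw [hG, el2, RingQuot.liftAlgHom_mkAlgHom_apply, FreeAlgebra.lift_ι_apply]
  · set c : K := (((t⁻¹ : Kˣ) : K) ^ 3) with hc
    set W := el1 K t G1.y1 G1.w1
    set Z := el1 K t G1.y1 G1.y1
    set Y := el1 K t G1.y1 G1.x1
    set I := el1 K t G1.y1 G1.inv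
    have hzy : Z*Y = c•(Y*Z) := by
      have := RingQuot.mkAlgHom_rel (S := K) (Rel1.ryx (K := K) (t := t) (j := G1.y1))
      simpa [el1, map_mul, map_smul, W, Z, Y, I, c] using this
    have hyw : Y*W = c•(W*Y) := by
      have := RingQuot.mkAlgHom_rel (S := K) (Rel1.rxw (K := K) (t := t) (j := G1.y1))
      simpa [el1, map_mul, map_smul, W, Z, Y, I, c] using this
    have hwz : W*Z = c•(Z*W) := by
      have := RingQuot.mkAlgHom_rel (S := K) (Rel1.rwy (K := K) (t := t) (j := G1.y1))
      simpa [el1, map_mul, map_smul, W, Z, Y, I, c] using this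
    have hiz : I*Z = 1 := by
      have := RingQuot.mkAlgHom_rel (S := K) (Rel1.inv_left (K := K) (t := t) (j := G1.y1))
      simpa [el1, map_mul, map_one, W, Z, Y, I, c] using this
    have hzi : Z*I = 1 := by
      have := RingQuot.mkAlgHom_rel (S := K) (Rel1.inv_right (K := K) (t := t) (j := G1.y1))
      simpa [el1, map_mul, map_one, W, Z, Y, I, c] using this
    obtain ⟨E1, E2, E3, E4, E5⟩ := nc_core c
      ((((s⁻¹ : Kˣ) : K) ^ 2 * ((t⁻¹ : Kˣ) : K)))
      ((((s⁻¹ : Kˣ) : K) ^ 1 * ((t⁻¹ : Kˣ) : K) ^ 2))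
      ((((s : Kˣ) : K) ^ 3 * ((t : Kˣ) : K) ^ 9))
      ((((s : Kˣ) : K) ^ 2 * ((t : Kˣ) : K)))
      W Z Y I hzy hyw hwz hiz hzi hδα
    have hrel : ∀ ⦃a b : FreeAlgebra K G3⦄, Rel3 K t G3.z3 a b →
        (FreeAlgebra.lift K (fun g : G3 => match g with
          | G3.w3 => ((((s : Kˣ) : K) ^ 3 * ((t : Kˣ) : K) ^ 9)) • (W*Z^3)
          | G3.x3 => ((((s⁻¹ : Kˣ) : K) ^ 1 * ((t⁻¹ : Kˣ) : K) ^ 2)) • (Y*I)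
          | G3.z3 => ((((s⁻¹ : Kˣ) : K) ^ 2 * ((t⁻¹ : Kˣ) : K))) • I
          | G3.inv => ((((s : Kˣ) : K) ^ 2 * ((t : Kˣ) : K))) • Z)) a =
        (FreeAlgebra.lift K (fun g : G3 => match g with
          | G3.w3 => ((((s : Kˣ) : K) ^ 3 * ((t : Kˣ) : K) ^ 9)) • (W*Z^3)
          | G3.x3 => ((((s⁻¹ : Kˣ) : K) ^ 1 * ((t⁻¹ : Kˣ) : K) ^ 2)) • (Y*I)
          | G3.z3 => ((((s⁻¹ : Kˣ) : K) ^ 2 * ((t⁻¹ : Kˣ) : K))) • I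
          | G3.inv => ((((s : Kˣ) : K) ^ 2 * ((t : Kˣ) : K))) • Z)) b := by
      intro a b h
      cases h <;>
        simp only [map_mul, map_smul, map_one, FreeAlgebra.lift_ι_apply]
      · exact E1
      · exact E2
      · exact E3
      · exact E4
      · exact E5
    set G := RingQuot.liftAlgHom K (s := Rel3 K t G3.z3) ⟨_, hrel⟩ with hG
    refine ⟨E1, E2, E3, G, ?_, ?_, ?_, ?_⟩ <;>
      rw [hG, el3, RingQuot.liftAlgHom_mkAlgHom_apply, FreeAlgebra.lift_ι_apply]
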